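/- For every m ≥ 2, all indices i_1, …, i_m ∈ {1,…,n}, and every permutation π of {1,…,m}: r_{i_{π(1)} i_{π(2)} ⋯ i_{π(m)}} = sgn(π) · r_{i_1 i_2 ⋯ i_m} in V^{⊗m}. -/

import Mathlib

open scoped TensorProduct
open PiTensorProduct

namespace OrePaper

variable (k : Type*) [Field k] (V : Type*) [AddCommGroup V] [Module k V]

/-- The canonical isomorphism `V^{⊗a} ⊗ V^{⊗b} ≃ V^{⊗(a+b)}`. -/
noncomputable abbrev mulPow (a b : ℕ) :
    ((⨂[k]^a V) ⊗[k] (⨂[k]^b V)) ≃ₗ[k] ⨂[k]^(a+b) V :=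
  TensorPower.mulEquiv

variable {k V}

/-- Identification of `V` with `V^{⊗1}`. -/
noncomputable def toPow1 : V ≃ₗ[k] ⨂[k]^1 V :=
  (PiTensorProduct.subsingletonEquiv (s := fun _ : Fin 1 => V) (0 : Fin 1)).symm

/-- `w ⊗ v ∈ V^{⊗(m+1)}` for `w ∈ V^{⊗m}`, `v ∈ V`. -/
noncomputable def append {m : ℕ} (w : ⨂[k]^m V) (v : V) : ⨂[k]^(m+1) V :=
  mulPow k V m 1 (w ⊗ₜ[k] toPow1 v)

/-- `v ⊗ w ∈ V^{⊗(m+1)}` for `v ∈ V`, `w ∈ V^{⊗m}`. -/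
noncomputable def prepend {m : ℕ} (v : V) (w : ⨂[k]^m V) : ⨂[k]^(m+1) V :=
  TensorPower.cast k V (Nat.add_comm 1 m) (mulPow k V 1 m (toPow1 v ⊗ₜ[k] w))

/-- The elements `r_{i_1 i_2 ⋯ i_m} ∈ V^{⊗m}`:
`r_{i_1 i_2} = x_{i_1} ⊗ x_{i_2} − x_{i_2} ⊗ x_{i_1}` and, recursively for `m ≥ 3`,
`r_{i_1 ⋯ i_m} = ∑_{j=1}^{m} (−1)^{m−j} r_{i_1 ⋯ î_j ⋯ i_m} ⊗ x_{i_j}`.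
(For a single index we set `r_i = x_i`, which is the convention making the left-handed
expansion hold also for `m = 2`.) -/
noncomputable def rElt {n : ℕ} (x : Fin n → V) : (m : ℕ) → (Fin m → Fin n) → ⨂[k]^m V
  | 0, _ => 0
  | 1, ι => toPow1 (x (ι 0))
  | 2, ι => append (toPow1 (x (ι 0))) (x (ι 1)) - append (toPow1 (x (ι 1))) (x (ι 0))
  | (m+3), ι => ∑ j : Fin (m+3),
      ((-1 : k)^((m+2) - (j : ℕ))) • append (rElt x (m+2) (ι ∘ j.succAbove)) (x (ι j))

/-! ### Auxiliary lemmas -/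

lemma aux_swap_comp_succAbove_left {M : ℕ} (p q : Fin (M+3)) (h : (q:ℕ) = (p:ℕ)+1) :
    ⇑(Equiv.swap p q) ∘ p.succAbove = q.succAbove := by
  funext i
  simp only [Function.comp_apply, Fin.succAbove, Equiv.swap_apply_def]
  split_ifs at * <;>
    first
      | rfl
      | (simp only [Fin.ext_iff, Fin.lt_def, Fin.val_succ, Fin.coe_castSucc] at *; omega)

lemma aux_swap_comp_succAbove_right {M : ℕ} (p q : Fin (M+3)) (h : (q:ℕ) = (p:ℕ)+1) :
    ⇑(Equiv.swap p q) ∘ q.succAbove = p.succAbove := by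
  funext i
  simp only [Function.comp_apply, Fin.succAbove, Equiv.swap_apply_def]
  split_ifs at * <;>
    first
      | rfl
      | (simp only [Fin.ext_iff, Fin.lt_def, Fin.val_succ, Fin.coe_castSucc] at *; omega)

lemma aux_swap_comp_succAbove_other {M : ℕ} (p q j : Fin (M+3)) (hp : j ≠ p) (hq : j ≠ q) :
    ∃ p' q' : Fin (M+2), j.succAbove p' = p ∧ j.succAbove q' = q ∧
      ⇑(Equiv.swap p q) ∘ j.succAbove = j.succAbove ∘ ⇑(Equiv.swap p' q') := by
  obtain ⟨p', hp'⟩ := Fin.exists_succAbove_eq hp.symm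
  obtain ⟨q', hq'⟩ := Fin.exists_succAbove_eq hq.symm
  refine ⟨p', q', hp', hq', ?_⟩
  funext i
  simp only [Function.comp_apply]
  by_cases h1 : i = p'
  · subst h1
    rw [hp', Equiv.swap_apply_left, Equiv.swap_apply_left, hq']
  · by_cases h2 : i = q'
    · subst h2
      rw [hq', Equiv.swap_apply_right, Equiv.swap_apply_right, hp']
    · rw [Equiv.swap_apply_of_ne_of_ne h1 h2,
        Equiv.swap_apply_of_ne_of_ne (fun h => h1 (Fin.succAbove_right_injective (hp' ▸ h)))
          (fun h => h2 (Fin.succAbove_right_injective (hq' ▸ h)))]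

section Abstract

variable {n M : ℕ} {W : Type*} [AddCommGroup W]

lemma aux_swap_of_adj (f : (Fin (M+2) → Fin n) → W)
    (hadj : ∀ (ι : Fin (M+2) → Fin n) (p q : Fin (M+2)), (q:ℕ) = (p:ℕ) + 1 →
      f (ι ∘ Equiv.swap p q) = - f ι) :
    ∀ (ι : Fin (M+2) → Fin n) (p q : Fin (M+2)), p ≠ q →
      f (ι ∘ Equiv.swap p q) = - f ι := by
  suffices H : ∀ (d : ℕ) (ι : Fin (M+2) → Fin n) (p q : Fin (M+2)),
      (q:ℕ) = (p:ℕ) + d + 1 → f (ι ∘ Equiv.swap p q) = - f ι by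
    intro ι p q hpq
    rcases Nat.lt_or_ge (p:ℕ) (q:ℕ) with h | h
    · exact H ((q:ℕ) - (p:ℕ) - 1) ι p q (by omega)
    · have h' : (q:ℕ) < (p:ℕ) := by
        rcases Nat.lt_or_ge (q:ℕ) (p:ℕ) with h2 | h2
        · exact h2
        · exact absurd (Fin.ext (le_antisymm h2 h)) hpq
      rw [Equiv.swap_comm]
      exact H ((p:ℕ) - (q:ℕ) - 1) ι q p (by omega)
  intro d
  induction d with
  | zero => exact fun ι p q h => hadj ι p q (by omega)
  | succ d ih =>
    intro ι p q h
    have hπ : (p:ℕ) + 1 < M + 2 := by have := q.isLt; omega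
    set p1 : Fin (M+2) := ⟨(p:ℕ)+1, hπ⟩ with hp1
    have hqp : q ≠ p := by intro e; rw [e] at h; omega
    have hqp1 : q ≠ p1 := by intro e; rw [e] at h; simp only [hp1] at h; omega
    have hswap : Equiv.swap p q
        = Equiv.swap p p1 * Equiv.swap p1 q * Equiv.swap p p1 := by
      have h2 := Equiv.swap_apply_apply (Equiv.swap p p1) p1 q
      rw [Equiv.swap_apply_right, Equiv.swap_apply_of_ne_of_ne hqp hqp1] at h2
      rw [h2]
      simp [mul_assoc]
    have hcomp : ι ∘ ⇑(Equiv.swap p q)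
        = ((ι ∘ ⇑(Equiv.swap p p1)) ∘ ⇑(Equiv.swap p1 q)) ∘ ⇑(Equiv.swap p p1) := by
      rw [hswap]; rfl
    rw [hcomp, hadj _ p p1 rfl, ih _ p1 q (by simp only [hp1]; omega), hadj _ p p1 rfl]
    simp

lemma aux_perm_of_adj (f : (Fin (M+2) → Fin n) → W)
    (hadj : ∀ (ι : Fin (M+2) → Fin n) (p q : Fin (M+2)), (q:ℕ) = (p:ℕ) + 1 →
      f (ι ∘ Equiv.swap p q) = - f ι) :
    ∀ (π : Equiv.Perm (Fin (M+2))) (ι : Fin (M+2) → Fin n),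
      f (ι ∘ π) = (Equiv.Perm.sign π : ℤ) • f ι := by
  have hswap := aux_swap_of_adj f hadj
  intro π
  refine Equiv.Perm.swap_induction_on π (by intro ι; simp) ?_
  intro σ x y hxy ihσ ι
  have hcomp : ι ∘ ⇑(Equiv.swap x y * σ) = (ι ∘ ⇑(Equiv.swap x y)) ∘ ⇑σ := rfl
  rw [hcomp, ihσ, hswap ι x y hxy]
  rw [Equiv.Perm.sign_mul, Equiv.Perm.sign_swap hxy]
  simp [smul_neg]

end Abstract

lemma aux_append_neg {m : ℕ} (w : ⨂[k]^m V) (v : V) :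
    append (k := k) (-w) v = - append w v := by
  simp [append, TensorProduct.neg_tmul]

lemma aux_rElt_perm {n : ℕ} (x : Fin n → V) :
    ∀ (m : ℕ) (ι : Fin (m+2) → Fin n) (π : Equiv.Perm (Fin (m+2))),
      rElt (k := k) x (m+2) (ι ∘ π) = (Equiv.Perm.sign π : ℤ) • rElt (k := k) x (m+2) ι := by
  intro m
  induction m with
  | zero =>
    have hadj : ∀ (ι : Fin 2 → Fin n) (p q : Fin 2), (q:ℕ) = (p:ℕ) + 1 →
        rElt (k := k) x 2 (ι ∘ Equiv.swap p q) = - rElt (k := k) x 2 ι := by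
      intro ι p q h
      have hp : p = 0 := by have := p.isLt; have := q.isLt; apply Fin.ext; omega
      have hq : q = 1 := by have := q.isLt; apply Fin.ext; omega
      subst hp; subst hq
      simp only [rElt, Function.comp_apply, Equiv.swap_apply_left, Equiv.swap_apply_right]
      abel
    intro ι π
    exact aux_perm_of_adj (rElt (k := k) x 2) hadj π ι
  | succ m ih =>
    have hadj : ∀ (ι : Fin (m+3) → Fin n) (p q : Fin (m+3)), (q:ℕ) = (p:ℕ) + 1 →
        rElt (k := k) x (m+3) (ι ∘ Equiv.swap p q) = - rElt (k := k) x (m+3) ι := by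
      intro ι p q hq1
      have hpq : p ≠ q := by intro e; rw [e] at hq1; omega
      have key : ∀ j : Fin (m+3),
          ((-1 : k)^((m+2) - (j : ℕ))) •
            append (rElt (k := k) x (m+2) ((ι ∘ ⇑(Equiv.swap p q)) ∘ j.succAbove))
              (x ((ι ∘ ⇑(Equiv.swap p q)) j))
          = - (((-1 : k)^((m+2) - ((Equiv.swap p q j) : ℕ))) •
              append (rElt (k := k) x (m+2) (ι ∘ (Equiv.swap p q j).succAbove))
                (x (ι (Equiv.swap p q j)))) := by
        intro j
        have hqle : (q:ℕ) ≤ m + 2 := by have := q.isLt; omega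
        by_cases hjp : j = p
        · subst hjp
          rw [Equiv.swap_apply_left]
          have hc : (ι ∘ ⇑(Equiv.swap j q)) ∘ j.succAbove = ι ∘ q.succAbove := by
            show ι ∘ (⇑(Equiv.swap j q) ∘ j.succAbove) = _
            rw [aux_swap_comp_succAbove_left j q hq1]
          rw [hc]
          have he : (m+2) - (j:ℕ) = ((m+2) - (q:ℕ)) + 1 := by omega
          rw [Function.comp_apply, Equiv.swap_apply_left, he, pow_succ, mul_neg_one, neg_smul]
        · by_cases hjq : j = q
          · subst hjq
            rw [Equiv.swap_apply_right]
            have hc : (ι ∘ ⇑(Equiv.swap p j)) ∘ j.succAbove = ι ∘ p.succAbove := by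
              show ι ∘ (⇑(Equiv.swap p j) ∘ j.succAbove) = _
              rw [aux_swap_comp_succAbove_right p j hq1]
            rw [hc]
            have he : (m+2) - (p:ℕ) = ((m+2) - (j:ℕ)) + 1 := by omega
            rw [Function.comp_apply, Equiv.swap_apply_right, he, pow_succ, mul_neg_one,
              neg_smul, neg_neg]
          · rw [Equiv.swap_apply_of_ne_of_ne hjp hjq]
            obtain ⟨p', q', hp', hq', hcomp⟩ := aux_swap_comp_succAbove_other p q j hjp hjq
            have hp'q' : p' ≠ q' := by
              intro e; apply hpq; rw [← hp', ← hq', e]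
            have hc : (ι ∘ ⇑(Equiv.swap p q)) ∘ j.succAbove
                = (ι ∘ j.succAbove) ∘ ⇑(Equiv.swap p' q') := by
              show ι ∘ (⇑(Equiv.swap p q) ∘ j.succAbove) = _
              rw [hcomp]; rfl
            rw [hc, ih (ι ∘ j.succAbove) (Equiv.swap p' q'), Equiv.Perm.sign_swap hp'q']
            rw [Function.comp_apply, Equiv.swap_apply_of_ne_of_ne hjp hjq]
            have : ((((-1 : ℤˣ) : ℤ)) • rElt (k := k) x (m+2) (ι ∘ j.succAbove))
                = - rElt (k := k) x (m+2) (ι ∘ j.succAbove) := by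
              simp
            rw [this, aux_append_neg, smul_neg]
      show rElt (k := k) x (m+3) (ι ∘ ⇑(Equiv.swap p q)) = - rElt (k := k) x (m+3) ι
      rw [show rElt (k := k) x (m+3) (ι ∘ ⇑(Equiv.swap p q))
          = ∑ j : Fin (m+3), ((-1 : k)^((m+2) - (j : ℕ))) •
              append (rElt (k := k) x (m+2) ((ι ∘ ⇑(Equiv.swap p q)) ∘ j.succAbove))
                (x ((ι ∘ ⇑(Equiv.swap p q)) j)) from rfl]
      rw [show rElt (k := k) x (m+3) ι
          = ∑ j : Fin (m+3), ((-1 : k)^((m+2) - (j : ℕ))) •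
              append (rElt (k := k) x (m+2) (ι ∘ j.succAbove)) (x (ι j)) from rfl]
      rw [← Finset.sum_neg_distrib]
      refine Fintype.sum_equiv (Equiv.swap p q) _ _ ?_
      intro j
      exact key j
    intro ι π
    exact aux_perm_of_adj (fun κ => rElt (k := k) x (m+3) κ) hadj π ι

/-- **Lemma 4.2(d)**: `r_{i_{π(1)} ⋯ i_{π(m)}} = sgn(π) · r_{i_1 ⋯ i_m}` for every
permutation `π` of the index positions. -/
theorem lemma_4_2_d {n : ℕ} (hn : 2 ≤ n) (b : Module.Basis (Fin n) k V)
    (m : ℕ) (ι : Fin (m+2) → Fin n) (π : Equiv.Perm (Fin (m+2))) :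
    rElt (k := k) (fun i => b i) (m+2) (ι ∘ π)
      = (Equiv.Perm.sign π : ℤ) • rElt (k := k) (fun i => b i) (m+2) ι := by
  exact aux_rElt_perm (fun i => b i) m ι π

end OrePaper
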